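/- Let N ≥ 3, let p, q be coprime positive integers, let x₀, y₀ be nonzero reals, φₓ, φ_y reals, and set φ₀ = (qφₓ − pφ_y)/π. For the Type II formation, the no-collision condition B holds if and only if there is no integer m with (φ₀ + (p − q)/2)·N = m·gcd(N, q − p). -/

import Mathlib

open Real Finset


lemma diff_case (N i j : ℕ) (hN : 3 ≤ N) (hi1 : 1 ≤ i) (hiN : i ≤ N) (hj1 : 1 ≤ j) (hjN : j ≤ N)
    (hij : i ≠ j) (h : Real.sin (π * ((i:ℝ) - (j:ℝ)) / N) = 0) : False := by
  rw [Real.sin_eq_zero_iff] at h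
  obtain ⟨n, hn⟩ := h
  have hN0 : (N:ℝ) ≠ 0 := by positivity
  have hπ : π ≠ 0 := Real.pi_ne_zero
  have h2 : (n:ℝ) * N = (i:ℝ) - j := by
    field_simp at hn
    have h' : π * ((n:ℝ) * N) = π * ((i:ℝ) - j) := by rw [hn]
    exact (mul_left_cancel₀ hπ h')
  have h3 : (n:ℤ) * N = (i:ℤ) - j := by exact_mod_cast h2
  rcases lt_trichotomy n 0 with h4 | h4 | h4
  · nlinarith [h3]
  · simp [h4] at h3; omega
  · nlinarith [h3]

lemma sum_case (N p i j : ℕ) (hN : 3 ≤ N) (τ φx : ℝ)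
    (hi1 : 1 ≤ i) (hiN : i ≤ N) (hj1 : 1 ≤ j) (hjN : j ≤ N) (hij : i ≠ j)
    (h : Real.sin (2 * π * ((p : ℝ) * τ + (i : ℝ) / N) + φx) =
         Real.sin (2 * π * ((p : ℝ) * τ + (j : ℝ) / N) + φx)) :
    ∃ k : ℤ, (2 * π * ((p:ℝ) * τ) + φx) * N * 2 + 2 * π * ((i:ℝ) + j) = (2 * (k:ℝ) + 1) * π * N := by
  have hN0 : (N:ℝ) ≠ 0 := by positivity
  have h2 : 2 * Real.sin ((2 * π * ((p : ℝ) * τ + (i : ℝ) / N) + φx - (2 * π * ((p : ℝ) * τ + (j : ℝ) / N) + φx)) / 2)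
      * Real.cos ((2 * π * ((p : ℝ) * τ + (i : ℝ) / N) + φx + (2 * π * ((p : ℝ) * τ + (j : ℝ) / N) + φx)) / 2) = 0 := by
    rw [← Real.sin_sub_sin]; linarith
  rcases mul_eq_zero.1 h2 with h3 | h3
  · rcases mul_eq_zero.1 h3 with h4 | h4
    · norm_num at h4
    · exfalso
      apply diff_case N i j hN hi1 hiN hj1 hjN hij
      rw [← h4]; congr 1; field_simp; ring
  · have h4 : (2 * π * ((p : ℝ) * τ + (i : ℝ) / N) + φx + (2 * π * ((p : ℝ) * τ + (j : ℝ) / N) + φx)) / 2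
        = 2 * π * ((p:ℝ) * τ) + π * ((i:ℝ) + j) / N + φx := by field_simp; ring
    rw [h4, Real.cos_eq_zero_iff] at h3
    obtain ⟨k, hk⟩ := h3
    refine ⟨k, ?_⟩
    have e : π * ((i:ℝ) + j) / N * N = π * ((i:ℝ) + j) := div_mul_cancel₀ _ hN0
    linear_combination 2*(N:ℝ)*hk - 2*e


lemma fwd_arith (N p q i j : ℕ) (hN : 3 ≤ N) (k l : ℤ) (τ φx φy φ₀ : ℝ)
    (hφ₀ : φ₀ = ((q : ℝ) * φx - (p : ℝ) * φy) / π)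
    (hk : (2 * π * ((p:ℝ) * τ) + φx) * N * 2 + 2 * π * ((i:ℝ) + j) = (2 * (k:ℝ) + 1) * π * N)
    (hl : (2 * π * ((q:ℝ) * τ) + φy) * N * 2 + 2 * π * ((i:ℝ) + j) = (2 * (l:ℝ) + 1) * π * N) :
    ∃ m : ℤ, (φ₀ + ((p : ℝ) - (q : ℝ)) / 2) * (N : ℝ) =
        (m : ℝ) * (Int.gcd (N : ℤ) ((q : ℤ) - (p : ℤ)) : ℝ) := by
  have hπ : (π:ℝ) ≠ 0 := Real.pi_ne_zero
  set d : ℤ := (Int.gcd (N : ℤ) ((q : ℤ) - (p : ℤ)) : ℤ) with hd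
  obtain ⟨c₁, hc₁⟩ : d ∣ (N:ℤ) := Int.gcd_dvd_left _ _
  obtain ⟨c₂, hc₂⟩ : d ∣ ((q:ℤ) - p) := Int.gcd_dvd_right _ _
  have hφ' : φ₀ * π = (q : ℝ) * φx - (p : ℝ) * φy := by rw [hφ₀]; field_simp
  have hc₁R : (N:ℝ) = (d:ℝ) * c₁ := by exact_mod_cast congrArg (Int.cast : ℤ → ℝ) hc₁
  have hc₂R : (q:ℝ) - p = (d:ℝ) * c₂ := by exact_mod_cast congrArg (Int.cast : ℤ → ℝ) hc₂
  have h2π : (2*π : ℝ) ≠ 0 := by positivity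
  refine ⟨((q:ℤ)*k - (p:ℤ)*l)*c₁ - ((i:ℤ)+j)*c₂, mul_right_cancel₀ h2π ?_⟩
  have hdR : ((Int.gcd (N : ℤ) ((q : ℤ) - (p : ℤ)) : ℕ) : ℝ) = (d:ℝ) := by
    rw [hd]; push_cast; ring
  rw [hdR]
  push_cast
  linear_combination (q:ℝ)*hk - (p:ℝ)*hl + 2*(N:ℝ)*hφ'
    + (2*π*((q:ℝ)*k-(p:ℝ)*l))*hc₁R - 2*π*((i:ℝ)+(j:ℝ))*hc₂R


lemma bwd (N p q : ℕ) (hN : 3 ≤ N) (hp : 0 < p) (hq : 0 < q) (hpq : Nat.Coprime p q)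
    (φx φy φ₀ : ℝ) (hφ₀ : φ₀ = ((q : ℝ) * φx - (p : ℝ) * φy) / π) (m : ℤ)
    (hm : (φ₀ + ((p : ℝ) - (q : ℝ)) / 2) * (N : ℝ) =
      (m : ℝ) * (Int.gcd (N : ℤ) ((q : ℤ) - (p : ℤ)) : ℝ)) :
    ∃ τ : ℝ, ∃ i j : ℕ, 1 ≤ i ∧ i ≤ N ∧ 1 ≤ j ∧ j ≤ N ∧ i ≠ j ∧
      Real.sin (2 * π * ((p : ℝ) * τ + (i : ℝ) / N) + φx) =
        Real.sin (2 * π * ((p : ℝ) * τ + (j : ℝ) / N) + φx) ∧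
      Real.sin (2 * π * ((q : ℝ) * τ + (i : ℝ) / N) + φy) =
        Real.sin (2 * π * ((q : ℝ) * τ + (j : ℝ) / N) + φy) := by
  have hπ : (π:ℝ) ≠ 0 := Real.pi_ne_zero
  have hN0 : (N:ℝ) ≠ 0 := by positivity
  have hNZ : (N:ℤ) ≠ 0 := by positivity
  have hNpos : (0:ℤ) < N := by positivity
  set d : ℤ := (Int.gcd (N : ℤ) ((q : ℤ) - (p : ℤ)) : ℤ) with hd
  have hdab : d = (N:ℤ) * Int.gcdA (N:ℤ) ((q:ℤ)-(p:ℤ)) + ((q:ℤ)-(p:ℤ)) * Int.gcdB (N:ℤ) ((q:ℤ)-(p:ℤ)) :=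
    Int.gcd_eq_gcd_ab _ _
  set A := Int.gcdA (N:ℤ) ((q:ℤ)-(p:ℤ)) with hA
  set B := Int.gcdB (N:ℤ) ((q:ℤ)-(p:ℤ)) with hB
  set u : ℤ := m * A with hu
  set v : ℤ := m * B with hv
  set r : ℤ := (-v) % N with hr
  have hr0 : 0 ≤ r := Int.emod_nonneg _ hNZ
  have hrN : r < N := Int.emod_lt_of_pos _ hNpos
  have hrv : r + v = (N:ℤ) * (-((-v) / N)) := by
    rw [hr, Int.emod_def]; ring
  set rn : ℕ := r.toNat with hrn
  have hrnr : (rn:ℤ) = r := Int.toNat_of_nonneg hr0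
  -- choose s' and w'
  set s' : ℕ := if 3 ≤ rn then rn else rn + N with hs'
  set w' : ℤ := if 3 ≤ rn then -((-v) / N) else -((-v) / N) + 1 with hw'def
  have hrnN : rn < N := by omega
  have hsw : (s':ℤ) + v = (N:ℤ) * w' := by
    rw [hs', hw'def]
    split_ifs with h
    · push_cast; rw [hrnr]; linarith [hrv]
    · push_cast; rw [hrnr]; linarith [hrv]
  have hs3 : 3 ≤ s' := by rw [hs']; split_ifs with h <;> omega
  have hsub : s' ≤ 2*N - 1 := by rw [hs']; split_ifs with h <;> omega
  -- t and Bezout for p q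
  set t : ℤ := u + w' * ((q:ℤ) - p) with ht
  obtain ⟨a, b, hab⟩ : ∃ a b : ℤ, a * p + b * q = 1 := by
    have h1 : IsCoprime (p:ℤ) (q:ℤ) := Int.isCoprime_iff_gcd_eq_one.mpr (by simpa using hpq)
    obtain ⟨a, b, hab⟩ := h1
    exact ⟨a, b, by linarith [hab]⟩
  set k : ℤ := t * b with hk
  set l : ℤ := -(t * a) with hl
  have hkl : (q:ℤ) * k - (p:ℤ) * l = t := by rw [hk, hl]; linear_combination t * hab
  have hbigZ : t * (N:ℤ) = m * d + ((q:ℤ) - p) * (s':ℤ) := by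
    rw [ht, hu]
    linear_combination (-m)*hdab + (-((q:ℤ)-p))*hsw + ((q:ℤ)-p)*hv
  -- choose i j
  set i : ℕ := if s' ≤ N + 1 then 1 else s' - N with hi
  set j : ℕ := if s' ≤ N + 1 then s' - 1 else N with hj
  have hij_props : 1 ≤ i ∧ i ≤ N ∧ 1 ≤ j ∧ j ≤ N ∧ i ≠ j ∧ i + j = s' := by
    rw [hi, hj]; split_ifs with h <;> omega
  obtain ⟨hi1, hiN, hj1, hjN, hij, hijs⟩ := hij_props
  -- the time of collision
  set τ : ℝ := ((2*(k:ℝ)+1)*π/2 - φx - π*(s':ℝ)/N) / (2*π*(p:ℝ)) with hτdef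
  have hp0 : (p:ℝ) ≠ 0 := by positivity
  have h2πp : (2*π*(p:ℝ)) ≠ 0 := by
    have : (0:ℝ) < p := by exact_mod_cast hp
    positivity
  have hτ' : τ * (2*π*(p:ℝ)) = (2*(k:ℝ)+1)*π/2 - φx - π*(s':ℝ)/N := by
    rw [hτdef]; exact div_mul_cancel₀ _ h2πp
  have e1 : π*(s':ℝ)/N*N = π*(s':ℝ) := div_mul_cancel₀ _ hN0
  have hτ'' : τ*(2*π*(p:ℝ))*N = ((2*(k:ℝ)+1)*π/2 - φx)*N - π*(s':ℝ) := by
    linear_combination (N:ℝ)*hτ' - e1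
  have hφ' : φ₀ * π = (q : ℝ) * φx - (p : ℝ) * φy := by rw [hφ₀]; field_simp
  have hbigR : (t:ℝ)*N = (m:ℝ)*((Int.gcd (N : ℤ) ((q : ℤ) - (p : ℤ)) : ℕ):ℝ) + ((q:ℝ)-p)*(s':ℝ) := by
    have h := congrArg (Int.cast : ℤ → ℝ) hbigZ
    push_cast at h
    rw [hd] at h
    push_cast at h
    convert h using 2 <;> push_cast <;> ring
  have hklR : (q:ℝ)*k - (p:ℝ)*l = (t:ℝ) := by exact_mod_cast hkl
  have P' : (p:ℝ) * (τ*(2*π*(q:ℝ))*N) = (p:ℝ) * ((((2*(l:ℝ)+1)*π/2 - φy)*N - π*(s':ℝ))) := by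
    linear_combination (q:ℝ)*hτ'' + (N:ℝ)*hφ' + π*(N:ℝ)*hklR + π*hbigR - π*hm
  have hτy'' : τ*(2*π*(q:ℝ))*N = ((2*(l:ℝ)+1)*π/2 - φy)*N - π*(s':ℝ) :=
    mul_left_cancel₀ hp0 P'
  have hτy : τ * (2*π*(q:ℝ)) = (2*(l:ℝ)+1)*π/2 - φy - π*(s':ℝ)/N := by
    field_simp
    linear_combination 2*hτy''
  have hijR : (i:ℝ) + j = (s':ℝ) := by exact_mod_cast hijs
  refine ⟨τ, i, j, hi1, hiN, hj1, hjN, hij, ?_, ?_⟩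
  · have harg : (2*π*((p:ℝ)*τ + (i:ℝ)/N) + φx + (2*π*((p:ℝ)*τ + (j:ℝ)/N) + φx))/2
        = (2*(k:ℝ)+1)*π/2 := by
      linear_combination hτ' + π/(N:ℝ)*hijR
    have hcos : Real.cos ((2*π*((p:ℝ)*τ + (i:ℝ)/N) + φx + (2*π*((p:ℝ)*τ + (j:ℝ)/N) + φx))/2) = 0 :=
      Real.cos_eq_zero_iff.mpr ⟨k, harg⟩
    have hss := Real.sin_sub_sin (2*π*((p:ℝ)*τ + (i:ℝ)/N) + φx) (2*π*((p:ℝ)*τ + (j:ℝ)/N) + φx)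
    rw [hcos, mul_zero] at hss
    linarith
  · have harg : (2*π*((q:ℝ)*τ + (i:ℝ)/N) + φy + (2*π*((q:ℝ)*τ + (j:ℝ)/N) + φy))/2
        = (2*(l:ℝ)+1)*π/2 := by
      linear_combination hτy + π/(N:ℝ)*hijR
    have hcos : Real.cos ((2*π*((q:ℝ)*τ + (i:ℝ)/N) + φy + (2*π*((q:ℝ)*τ + (j:ℝ)/N) + φy))/2) = 0 :=
      Real.cos_eq_zero_iff.mpr ⟨l, harg⟩
    have hss := Real.sin_sub_sin (2*π*((q:ℝ)*τ + (i:ℝ)/N) + φy) (2*π*((q:ℝ)*τ + (j:ℝ)/N) + φy)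
    rw [hcos, mul_zero] at hss
    linarith


/-- For a Type II formation of `N ≥ 3` deputy satellites with coprime positive
frequencies `p, q` and nonzero amplitudes, the no-collision condition B holds
iff `(φ₀ + (p - q)/2)·N` is not an integer multiple of `gcd(N, q - p)`,
where `φ₀ = (q·φx - p·φy)/π`. -/
theorem typeII_noCollision_iff (N p q : ℕ) (hN : 3 ≤ N) (hp : 0 < p) (hq : 0 < q)
    (hpq : Nat.Coprime p q) (x₀ y₀ φx φy φ₀ : ℝ) (hx₀ : x₀ ≠ 0) (hy₀ : y₀ ≠ 0)
    (hφ₀ : φ₀ = ((q : ℝ) * φx - (p : ℝ) * φy) / π) :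
    (∀ τ : ℝ, ∀ i ∈ Finset.Icc 1 N, ∀ j ∈ Finset.Icc 1 N, i ≠ j →
        (x₀ * Real.sin (2 * π * ((p : ℝ) * τ + (i : ℝ) / N) + φx),
         y₀ * Real.sin (2 * π * ((q : ℝ) * τ + (i : ℝ) / N) + φy)) ≠
        (x₀ * Real.sin (2 * π * ((p : ℝ) * τ + (j : ℝ) / N) + φx),
         y₀ * Real.sin (2 * π * ((q : ℝ) * τ + (j : ℝ) / N) + φy))) ↔
    ¬ ∃ m : ℤ, (φ₀ + ((p : ℝ) - (q : ℝ)) / 2) * (N : ℝ) =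
        (m : ℝ) * (Int.gcd (N : ℤ) ((q : ℤ) - (p : ℤ)) : ℝ) := by
  constructor
  · rintro h ⟨m, hm⟩
    obtain ⟨τ, i, j, hi1, hiN, hj1, hjN, hij, hx, hy⟩ :=
      bwd N p q hN hp hq hpq φx φy φ₀ hφ₀ m hm
    exact h τ i (Finset.mem_Icc.mpr ⟨hi1, hiN⟩) j (Finset.mem_Icc.mpr ⟨hj1, hjN⟩) hij
      (by rw [hx, hy])
  · intro h τ i hi j hj hij heq
    apply h
    obtain ⟨hi1, hiN⟩ := Finset.mem_Icc.mp hi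
    obtain ⟨hj1, hjN⟩ := Finset.mem_Icc.mp hj
    have hxe := congrArg Prod.fst heq
    have hye := congrArg Prod.snd heq
    simp only at hxe hye
    have hsx := mul_left_cancel₀ hx₀ hxe
    have hsy := mul_left_cancel₀ hy₀ hye
    obtain ⟨k, hk⟩ := sum_case N p i j hN τ φx hi1 hiN hj1 hjN hij hsx
    obtain ⟨l, hl⟩ := sum_case N q i j hN τ φy hi1 hiN hj1 hjN hij hsy
    exact fwd_arith N p q i j hN k l τ φx φy φ₀ hφ₀ hk hl
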